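/- arXiv:1403.4901 — 4 statements merged into one kernel-verified Lean document; each statement's English description precedes it below -/
import Mathlib

section
/- Let V be a finite-dimensional real inner product space and let A, B be linear endomorphisms of V such that A is normal, A + B is normal, and A and B commute (A ∘ B = B ∘ A). Then B is normal: B ∘ B† = B† ∘ B. -/
open RealInnerProductSpace in
open LinearMap in
lemma aux_eq_zero_of_trace {V : Type*} [NormedAddCommGroup V] [InnerProductSpace ℝ V]
    [FiniteDimensional ℝ V] (T : V →ₗ[ℝ] V)
    (h : trace ℝ V (adjoint T * T) = 0) : T = 0 := by
  let b := stdOrthonormalBasis ℝ V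
  have htr : trace ℝ V (adjoint T * T)
      = ∑ i, ⟪T (b i), T (b i)⟫ := by
    rw [trace_eq_matrix_trace ℝ b.toBasis, Matrix.trace]
    congr 1
    ext i
    rw [Matrix.diag_apply, toMatrix_apply, b.coe_toBasis, b.coe_toBasis_repr_apply,
      b.repr_apply_apply]
    simp [Module.End.mul_apply, adjoint_inner_right]
  rw [htr] at h
  have hzero : ∀ i, T (b i) = 0 := by
    intro i
    have hnn : ∀ j ∈ Finset.univ, (0:ℝ) ≤ ⟪T (b j), T (b j)⟫ :=
      fun j _ => real_inner_self_nonneg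
    have := (Finset.sum_eq_zero_iff_of_nonneg hnn).mp h i (Finset.mem_univ i)
    exact inner_self_eq_zero.mp this
  apply b.toBasis.ext
  intro i
  simp [b.coe_toBasis, hzero i]

/-- If `A` is normal, `A + B` is normal, and `A` and `B` commute, then
`B` is normal. -/
theorem normal_of_add_normal_of_commute
    {V : Type*} [NormedAddCommGroup V] [InnerProductSpace ℝ V] [FiniteDimensional ℝ V]
    (A B : V →ₗ[ℝ] V)
    (hA : A ∘ₗ LinearMap.adjoint A = LinearMap.adjoint A ∘ₗ A)
    (hAB : (A + B) ∘ₗ LinearMap.adjoint (A + B) = LinearMap.adjoint (A + B) ∘ₗ (A + B))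
    (hcomm : A ∘ₗ B = B ∘ₗ A) :
    B ∘ₗ LinearMap.adjoint B = LinearMap.adjoint B ∘ₗ B := by
  classical
  simp only [← Module.End.mul_eq_comp] at hA hAB hcomm ⊢
  set A' := LinearMap.adjoint A with hA'
  set B' := LinearMap.adjoint B with hB'
  set τ := LinearMap.trace ℝ V with hτ
  set D : V →ₗ[ℝ] V := A' * B - B * A' with hD
  have adj_mul : ∀ f g : V →ₗ[ℝ] V,
      LinearMap.adjoint (f * g) = LinearMap.adjoint g * LinearMap.adjoint f := by
    intro f g
    simp only [Module.End.mul_eq_comp, LinearMap.adjoint_comp]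
  have hDadj : LinearMap.adjoint D = B' * A - A * B' := by
    rw [hD, map_sub, adj_mul, adj_mul, LinearMap.adjoint_adjoint, ← hB']
  have tmc : ∀ f g : V →ₗ[ℝ] V, τ (f * g) = τ (g * f) :=
    fun f g => LinearMap.trace_mul_comm ℝ f g
  have htr : τ (LinearMap.adjoint D * D) = 0 := by
    rw [hDadj, hD]
    have e1 : (B' * A - A * B') * (A' * B - B * A')
        = B' * A * A' * B - B' * A * B * A' - A * B' * A' * B + A * B' * B * A' := by
      noncomm_ring
    rw [e1]
    have t1 : τ (B' * A * A' * B) = τ (B * B' * (A' * A)) := by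
      calc τ (B' * A * A' * B) = τ (B' * (A * A') * B) := by congr 1
        _ = τ (B' * (A' * A) * B) := by rw [hA]
        _ = τ (B' * (A' * A * B)) := by congr 1
        _ = τ (A' * A * B * B') := tmc _ _
        _ = τ ((A' * A) * (B * B')) := by congr 1
        _ = τ (B * B' * (A' * A)) := tmc _ _
    have t2 : τ (B' * A * B * A') = τ (B' * B * (A' * A)) := by
      calc τ (B' * A * B * A') = τ (B' * (A * B) * A') := by congr 1
        _ = τ (B' * (B * A) * A') := by rw [hcomm]
        _ = τ (B' * B * (A * A')) := by congr 1
        _ = τ (B' * B * (A' * A)) := by rw [hA]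
    have t3 : τ (A * B' * A' * B) = τ (B * B' * (A' * A)) := by
      calc τ (A * B' * A' * B) = τ (A * (B' * A' * B)) := by congr 1
        _ = τ (B' * A' * B * A) := tmc _ _
        _ = τ (B' * A' * (B * A)) := by congr 1
        _ = τ (B' * A' * (A * B)) := by rw [← hcomm]
        _ = τ (B' * (A' * A * B)) := by congr 1
        _ = τ (A' * A * B * B') := tmc _ _
        _ = τ ((A' * A) * (B * B')) := by congr 1
        _ = τ (B * B' * (A' * A)) := tmc _ _
    have t4 : τ (A * B' * B * A') = τ (B' * B * (A' * A)) := by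
      calc τ (A * B' * B * A') = τ (A * (B' * B * A')) := by congr 1
        _ = τ (B' * B * A' * A) := tmc _ _
        _ = τ (B' * B * (A' * A)) := by congr 1
    simp only [map_add, map_sub, t1, t2, t3, t4]
    ring
  have hD0 : D = 0 := aux_eq_zero_of_trace D htr
  have hD0' : LinearMap.adjoint D = 0 := by rw [hD0, map_zero]
  have h1 : A' * B = B * A' := by
    have := hD0; rw [hD, sub_eq_zero] at this; exact this
  have h2 : B' * A = A * B' := by
    have := hD0'; rw [hDadj, sub_eq_zero] at this; exact this
  have hexp : A * A' + A * B' + B * A' + B * B'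
      = A' * A + A' * B + B' * A + B' * B := by
    have h := hAB
    rw [map_add, ← hA', ← hB'] at h
    calc A * A' + A * B' + B * A' + B * B' = (A + B) * (A' + B') := by noncomm_ring
      _ = (A' + B') * (A + B) := h
      _ = A' * A + A' * B + B' * A + B' * B := by noncomm_ring
  have key : B * B' - B' * B = 0 := by
    have e : B * B' - B' * B
        = ((A * A' + A * B' + B * A' + B * B') - (A' * A + A' * B + B' * A + B' * B))
          - (A * A' - A' * A) - (B * A' - A' * B) - (A * B' - B' * A) := by abel
    rw [e, hexp, hA, ← h1, ← h2]
    simp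
  exact sub_eq_zero.mp key
end

section
/- Let V be a finite-dimensional real inner product space and let N, B be linear endomorphisms of V with N normal and B ∘ N = N ∘ B. Then B also commutes with the adjoint of N: B ∘ N† = N† ∘ B. -/
open LinearMap in
private lemma aux_trace_zero {V : Type*} [NormedAddCommGroup V] [InnerProductSpace ℝ V]
    [FiniteDimensional ℝ V] (f : V →ₗ[ℝ] V)
    (h : LinearMap.trace ℝ V (LinearMap.adjoint f ∘ₗ f) = 0) : f = 0 := by
  let b := stdOrthonormalBasis ℝ V
  have htr : LinearMap.trace ℝ V (LinearMap.adjoint f ∘ₗ f)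
      = ∑ i, ‖f (b i)‖ ^ 2 := by
    rw [LinearMap.trace_eq_matrix_trace ℝ b.toBasis]
    rw [Matrix.trace]
    congr 1
    ext i
    rw [Matrix.diag_apply, LinearMap.toMatrix_apply, b.coe_toBasis,
      b.coe_toBasis_repr_apply, b.repr_apply_apply]
    simp only [LinearMap.comp_apply]
    rw [LinearMap.adjoint_inner_right, real_inner_self_eq_norm_sq]
  rw [htr] at h
  have hz : ∀ i, f (b i) = 0 := by
    intro i
    have := (Finset.sum_eq_zero_iff_of_nonneg (fun i _ => sq_nonneg ‖f (b i)‖)).mp h i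
      (Finset.mem_univ i)
    simpa [pow_eq_zero_iff] using this
  refine b.toBasis.ext fun i => ?_
  simpa [b.coe_toBasis] using hz i

/-- finite-dimensional real Fuglede theorem: If `N` is normal and `B`
commutes with `N`, then `B` commutes with the adjoint of `N`. -/
theorem fuglede_finiteDimensional_real
    {V : Type*} [NormedAddCommGroup V] [InnerProductSpace ℝ V] [FiniteDimensional ℝ V]
    (N B : V →ₗ[ℝ] V)
    (hN : N ∘ₗ LinearMap.adjoint N = LinearMap.adjoint N ∘ₗ N)
    (hcomm : B ∘ₗ N = N ∘ₗ B) :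
    B ∘ₗ LinearMap.adjoint N = LinearMap.adjoint N ∘ₗ B := by
  set N' := LinearMap.adjoint N with hN'
  set B' := LinearMap.adjoint B with hB'
  -- work with `*` (multiplication in the endomorphism ring)
  have hNmul : N * N' = N' * N := hN
  have hBmul : B * N = N * B := hcomm
  -- adjoint of the commutation hypothesis
  have hadj : N' * B' = B' * N' := by
    have := congrArg LinearMap.adjoint hcomm
    simp only [LinearMap.adjoint_comp] at this
    exact this
  set T : V →ₗ[ℝ] V := B * N' - N' * B with hT
  have hTadj : LinearMap.adjoint T = N * B' - B' * N := by
    rw [hT, map_sub]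
    show LinearMap.adjoint ((B : V →ₗ[ℝ] V) ∘ₗ N') - LinearMap.adjoint ((N' : V →ₗ[ℝ] V) ∘ₗ B)
        = N * B' - B' * N
    rw [LinearMap.adjoint_comp, LinearMap.adjoint_comp, LinearMap.adjoint_adjoint]
    rfl
  have key : LinearMap.trace ℝ V (T * LinearMap.adjoint T) = 0 := by
    rw [hTadj, hT]
    have expand : (B * N' - N' * B) * (N * B' - B' * N)
        = B * N' * N * B' - B * N' * B' * N - N' * B * N * B' + N' * B * B' * N := by
      noncomm_ring
    rw [expand]
    have t12 : LinearMap.trace ℝ V (B * N' * N * B')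
        = LinearMap.trace ℝ V (B * N' * B' * N) := by
      have h1 : B * N' * N * B' = N * (B * N' * B') := by
        calc B * N' * N * B' = B * (N' * N) * B' := by noncomm_ring
          _ = B * (N * N') * B' := by rw [hNmul]
          _ = (B * N) * N' * B' := by noncomm_ring
          _ = (N * B) * N' * B' := by rw [hBmul]
          _ = N * (B * N' * B') := by noncomm_ring
      rw [h1, LinearMap.trace_mul_comm]
    have t34 : LinearMap.trace ℝ V (N' * B * N * B')
        = LinearMap.trace ℝ V (N' * B * B' * N) := by
      have h1 : N' * B * N * B' = N * (N' * B * B') := by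
        calc N' * B * N * B' = N' * (B * N) * B' := by noncomm_ring
          _ = N' * (N * B) * B' := by rw [hBmul]
          _ = (N' * N) * (B * B') := by noncomm_ring
          _ = (N * N') * (B * B') := by rw [hNmul]
          _ = N * (N' * B * B') := by noncomm_ring
      rw [h1, LinearMap.trace_mul_comm]
    rw [map_add, map_sub, map_sub, t12, t34]
    ring
  have hTzero : T = 0 := by
    apply aux_trace_zero
    have : LinearMap.adjoint T ∘ₗ T = LinearMap.adjoint T * T := rfl
    rw [this, LinearMap.trace_mul_comm]
    exact key
  have : B * N' - N' * B = 0 := hTzero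
  have h2 : B * N' = N' * B := by
    have := sub_eq_zero.mp this
    exact this
  exact h2
end

section
/- Let V be a finite-dimensional real inner product space, let λ < 0 be a real number, and let E, F be symmetric linear endomorphisms of V satisfying: (a) tr(E) > 0; (b) tr(F ∘ F) + λ · tr(F) ≤ 0; (c) tr(F ∘ E) ≥ −λ · tr(E); (d) tr(F ∘ E) = tr(F); and (e) tr(E ∘ E) = tr(E). Then F = −λ · E. -/
open scoped RealInnerProductSpace

lemma trace_sq_eq_sum_norm_sq
    {V : Type*} [NormedAddCommGroup V] [InnerProductSpace ℝ V] [FiniteDimensional ℝ V]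
    (G : V →ₗ[ℝ] V) (hG : LinearMap.adjoint G = G) :
    LinearMap.trace ℝ V (G ∘ₗ G) =
      ∑ i, ‖G (stdOrthonormalBasis ℝ V i)‖ ^ 2 := by
  set b := stdOrthonormalBasis ℝ V
  rw [LinearMap.trace_eq_matrix_trace ℝ b.toBasis, Matrix.trace]
  apply Finset.sum_congr rfl
  intro i _
  have h1 : (LinearMap.toMatrix b.toBasis b.toBasis (G ∘ₗ G)).diag i
      = ⟪b i, G (G (b i))⟫ := by
    simp [LinearMap.toMatrix_apply, Matrix.diag, b.coe_toBasis_repr_apply,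
      b.repr_apply_apply]
  rw [h1]
  have h2 := LinearMap.adjoint_inner_right G (b i) (G (b i))
  rw [hG] at h2
  rw [h2, real_inner_self_eq_norm_sq]

lemma symm_eq_zero_of_trace_sq_nonpos
    {V : Type*} [NormedAddCommGroup V] [InnerProductSpace ℝ V] [FiniteDimensional ℝ V]
    (G : V →ₗ[ℝ] V) (hG : LinearMap.adjoint G = G)
    (h : LinearMap.trace ℝ V (G ∘ₗ G) ≤ 0) : G = 0 := by
  rw [trace_sq_eq_sum_norm_sq G hG] at h
  have hz : ∀ i ∈ (Finset.univ : Finset (Fin (Module.finrank ℝ V))),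
      ‖G (stdOrthonormalBasis ℝ V i)‖ ^ 2 = 0 := by
    have := Finset.sum_nonneg (fun i (_ : i ∈ Finset.univ) =>
      sq_nonneg ‖G (stdOrthonormalBasis ℝ V i)‖)
    exact (Finset.sum_eq_zero_iff_of_nonneg
      (fun i _ => sq_nonneg _)).mp (le_antisymm h this)
  apply (stdOrthonormalBasis ℝ V).toBasis.ext
  intro i
  have := hz i (Finset.mem_univ i)
  simp only [OrthonormalBasis.coe_toBasis, LinearMap.zero_apply]
  rw [pow_eq_zero_iff (by norm_num), norm_eq_zero] at this
  exact this

/-- a "reverse Cauchy–Schwarz" forcing linear dependence.  If `λ < 0`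
and symmetric endomorphisms `E, F` of a finite-dimensional real inner product space
satisfy `tr E > 0`, `tr F² + λ tr F ≤ 0`, `tr(F E) ≥ -λ tr E`, `tr(F E) = tr F` and
`tr E² = tr E`, then `F = -λ E`. -/
theorem symm_endo_eq_of_reverse_cauchy_schwarz
    {V : Type*} [NormedAddCommGroup V] [InnerProductSpace ℝ V] [FiniteDimensional ℝ V]
    (lam : ℝ) (hlam : lam < 0)
    (E F : V →ₗ[ℝ] V)
    (hE_symm : LinearMap.adjoint E = E)
    (hF_symm : LinearMap.adjoint F = F)
    (ha : 0 < LinearMap.trace ℝ V E)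
    (hb : LinearMap.trace ℝ V (F ∘ₗ F) + lam * LinearMap.trace ℝ V F ≤ 0)
    (hc : LinearMap.trace ℝ V (F ∘ₗ E) ≥ -lam * LinearMap.trace ℝ V E)
    (hd : LinearMap.trace ℝ V (F ∘ₗ E) = LinearMap.trace ℝ V F)
    (he : LinearMap.trace ℝ V (E ∘ₗ E) = LinearMap.trace ℝ V E) :
    F = (-lam) • E := by
  set μ : ℝ := -lam with hμ
  have hμpos : 0 < μ := by simp [hμ]; linarith
  set G : V →ₗ[ℝ] V := F - μ • E with hGdef
  have hG_symm : LinearMap.adjoint G = G := by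
    simp [hGdef, map_sub, map_smul, hE_symm, hF_symm]
  -- trace identities
  have hEF : LinearMap.trace ℝ V (E ∘ₗ F) = LinearMap.trace ℝ V (F ∘ₗ E) := by
    simpa [Module.End.mul_eq_comp] using LinearMap.trace_mul_comm ℝ E F
  have hGG : G ∘ₗ G = F ∘ₗ F - μ • (F ∘ₗ E) - μ • (E ∘ₗ F) + (μ * μ) • (E ∘ₗ E) := by
    simp only [hGdef]
    ext x
    simp [LinearMap.comp_apply, map_sub, map_smul, smul_sub, mul_smul,
      sub_sub_eq_add_sub]
    module
  have htr : LinearMap.trace ℝ V (G ∘ₗ G)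
      = LinearMap.trace ℝ V (F ∘ₗ F) - 2 * μ * LinearMap.trace ℝ V (F ∘ₗ E)
        + μ * μ * LinearMap.trace ℝ V (E ∘ₗ E) := by
    rw [hGG]
    simp [map_sub, map_add, map_smul, hEF, smul_eq_mul]
    ring
  have hle : LinearMap.trace ℝ V (G ∘ₗ G) ≤ 0 := by
    rw [htr, hd, he]
    have h1 : LinearMap.trace ℝ V (F ∘ₗ F) ≤ μ * LinearMap.trace ℝ V F := by
      rw [hμ]; linarith
    have h2 : LinearMap.trace ℝ V F ≥ μ * LinearMap.trace ℝ V E := by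
      rw [← hd]; exact hc
    nlinarith
  have hG0 : G = 0 := symm_eq_zero_of_trace_sq_nonpos G hG_symm hle
  have : F - μ • E = 0 := hG0
  rw [sub_eq_zero] at this
  rw [this, hμ]
end

section
/- Let V be a finite-dimensional real inner product space, let P be an orthogonal projection on V (i.e., P ∘ P = P and P† = P), set Q = 1 − P, and let S be a symmetric endomorphism of V. Then tr((P ∘ S ∘ P)²) + tr((Q ∘ S ∘ Q)²) ≤ tr(S ∘ S), with equality if and only if S commutes with P (S ∘ P = P ∘ S). -/
private lemma trace_adjoint_mul_self_sum
    {V : Type*} [NormedAddCommGroup V] [InnerProductSpace ℝ V] [FiniteDimensional ℝ V]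
    (T : V →ₗ[ℝ] V) :
    LinearMap.trace ℝ V (LinearMap.adjoint T * T) =
      ∑ i, (inner ℝ (T (stdOrthonormalBasis ℝ V i)) (T (stdOrthonormalBasis ℝ V i)) : ℝ) := by
  set b := stdOrthonormalBasis ℝ V
  rw [LinearMap.trace_eq_matrix_trace ℝ b.toBasis, Matrix.trace]
  congr 1
  ext i
  rw [Matrix.diag_apply, LinearMap.toMatrix_apply, b.coe_toBasis,
    b.coe_toBasis_repr_apply, b.repr_apply_apply]
  exact LinearMap.adjoint_inner_right T _ _

private lemma trace_adjoint_mul_self_nonneg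
    {V : Type*} [NormedAddCommGroup V] [InnerProductSpace ℝ V] [FiniteDimensional ℝ V]
    (T : V →ₗ[ℝ] V) : 0 ≤ LinearMap.trace ℝ V (LinearMap.adjoint T * T) := by
  rw [trace_adjoint_mul_self_sum]
  exact Finset.sum_nonneg fun i _ => real_inner_self_nonneg

private lemma trace_adjoint_mul_self_eq_zero
    {V : Type*} [NormedAddCommGroup V] [InnerProductSpace ℝ V] [FiniteDimensional ℝ V]
    (T : V →ₗ[ℝ] V) :
    LinearMap.trace ℝ V (LinearMap.adjoint T * T) = 0 ↔ T = 0 := by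
  rw [trace_adjoint_mul_self_sum]
  constructor
  · intro h
    have h' := (Finset.sum_eq_zero_iff_of_nonneg
      (fun i _ => real_inner_self_nonneg)).mp h
    apply (stdOrthonormalBasis ℝ V).toBasis.ext
    intro i
    have := h' i (Finset.mem_univ i)
    simpa [OrthonormalBasis.coe_toBasis, inner_self_eq_zero] using this
  · intro h; simp [h]

/-- For an orthogonal projection `P` (with `Q = 1 - P`) and a symmetric
endomorphism `S` of a finite-dimensional real inner product space,
`tr((P S P)²) + tr((Q S Q)²) ≤ tr(S²)`, with equality if and only if `S` commutes
with `P`. -/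
theorem trace_sq_compress_le_trace_sq
    {V : Type*} [NormedAddCommGroup V] [InnerProductSpace ℝ V] [FiniteDimensional ℝ V]
    (P S : V →ₗ[ℝ] V)
    (hP_idem : P ∘ₗ P = P)
    (hP_symm : LinearMap.adjoint P = P)
    (hS_symm : LinearMap.adjoint S = S) :
    LinearMap.trace ℝ V ((P ∘ₗ S ∘ₗ P) ∘ₗ (P ∘ₗ S ∘ₗ P))
        + LinearMap.trace ℝ V
            (((1 - P) ∘ₗ S ∘ₗ (1 - P)) ∘ₗ ((1 - P) ∘ₗ S ∘ₗ (1 - P)))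
      ≤ LinearMap.trace ℝ V (S ∘ₗ S)
    ∧ (LinearMap.trace ℝ V ((P ∘ₗ S ∘ₗ P) ∘ₗ (P ∘ₗ S ∘ₗ P))
          + LinearMap.trace ℝ V
              (((1 - P) ∘ₗ S ∘ₗ (1 - P)) ∘ₗ ((1 - P) ∘ₗ S ∘ₗ (1 - P)))
        = LinearMap.trace ℝ V (S ∘ₗ S) ↔ S ∘ₗ P = P ∘ₗ S) := by
  set t := LinearMap.trace ℝ V with ht
  set T : V →ₗ[ℝ] V := S * P - P * S with hT
  -- converting ∘ₗ to *
  have hmul : ∀ f g : V →ₗ[ℝ] V, f ∘ₗ g = f * g := fun _ _ => rfl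
  have hPP : P * P = P := hP_idem
  -- adjoint of T is -T
  have hTadj : LinearMap.adjoint T = -T := by
    rw [hT, map_sub]
    rw [show (S * P : V →ₗ[ℝ] V) = S ∘ₗ P from rfl, show (P * S : V →ₗ[ℝ] V) = P ∘ₗ S from rfl,
      LinearMap.adjoint_comp, LinearMap.adjoint_comp, hP_symm, hS_symm]
    exact (neg_sub _ _).symm
  -- basic cyclicity facts
  have cyc : ∀ f g : V →ₗ[ℝ] V, t (f * g) = t (g * f) := fun f g =>
    LinearMap.trace_mul_comm ℝ f g
  -- key trace values
  have hα : t ((P * S * P) * (P * S * P)) = t (P * S * P * S) := by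
    rw [show (P * S * P) * (P * S * P) = P * S * (P * P) * S * P by noncomm_ring, hPP,
      cyc (P * S * P * S) P,
      show P * (P * S * P * S) = P * P * S * P * S by noncomm_ring, hPP]
  have hγ1 : t (S * P * S) = t (S * S * P) := by
    rw [cyc (S * P) S, show S * (S * P) = S * S * P by noncomm_ring]
  have hγ2 : t (P * S * S) = t (S * S * P) := by
    rw [show P * S * S = P * (S * S) by noncomm_ring, cyc P (S * S)]
  have hα2 : t (S * P * S * P) = t (P * S * P * S) := by
    rw [show S * P * S * P = (S * P * S) * P by noncomm_ring, cyc (S * P * S) P,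
      show P * (S * P * S) = P * S * P * S by noncomm_ring]
  have hγ3 : t (P * S * S * P) = t (S * S * P) := by
    rw [show P * S * S * P = P * (S * S * P) by noncomm_ring, cyc P (S * S * P),
      show S * S * P * P = S * S * (P * P) by noncomm_ring, hPP]
  have hγ4 : t (S * P * P * S) = t (S * S * P) := by
    rw [show S * P * P * S = S * (P * P) * S by noncomm_ring, hPP]
    exact hγ1
  -- the Q-term
  have hδ : t (((1 - P) * S * (1 - P)) * ((1 - P) * S * (1 - P)))
      = t (S * S) - 2 * t (S * S * P) + t (P * S * P * S) := by
    have hQQ : ((1:V →ₗ[ℝ] V) - P) * (1 - P) = 1 - P := by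
      have h' : ((1:V →ₗ[ℝ] V) - P) * (1 - P) = 1 - P - P + P * P := by noncomm_ring
      rw [h', hPP]; abel
    rw [show ((1 - P) * S * (1 - P)) * ((1 - P) * S * (1 - P))
        = (1 - P) * S * ((1 - P) * (1 - P)) * S * (1 - P) by noncomm_ring, hQQ,
      cyc ((1 - P) * S * (1 - P) * S) (1 - P),
      show (1 - P) * ((1 - P) * S * (1 - P) * S)
        = ((1 - P) * (1 - P)) * S * (1 - P) * S by noncomm_ring, hQQ,
      show ((1:V →ₗ[ℝ] V) - P) * S * (1 - P) * S
        = S * S - P * S * S - S * P * S + P * S * P * S by noncomm_ring,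
      map_add, map_sub, map_sub, hγ1, hγ2]
    ring
  -- trace of adjoint T * T
  have hTT : t (LinearMap.adjoint T * T)
      = 2 * t (S * S * P) - 2 * t (P * S * P * S) := by
    rw [hTadj, hT,
      show (-(S * P - P * S)) * (S * P - P * S)
        = P * S * S * P + S * P * P * S - P * S * P * S - S * P * S * P by noncomm_ring,
      map_sub, map_sub, map_add, hγ3, hγ4, hα2]
    ring
  -- the master identity
  have master : t ((P ∘ₗ S ∘ₗ P) ∘ₗ (P ∘ₗ S ∘ₗ P))
      + t (((1 - P) ∘ₗ S ∘ₗ (1 - P)) ∘ₗ ((1 - P) ∘ₗ S ∘ₗ (1 - P)))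
      + t (LinearMap.adjoint T * T) = t (S ∘ₗ S) := by
    simp only [hmul, ← mul_assoc]
    rw [show P * S * P * P * S * P = P * S * P * (P * S * P) by noncomm_ring,
      show (1 - P) * S * (1 - P) * (1 - P) * S * (1 - P)
        = (1 - P) * S * (1 - P) * ((1 - P) * S * (1 - P)) by noncomm_ring,
      hα, hδ, hTT]
    ring
  have hnn := trace_adjoint_mul_self_nonneg T
  rw [← ht] at hnn
  constructor
  · linarith [master]
  · constructor
    · intro h
      have hz : t (LinearMap.adjoint T * T) = 0 := by linarith [master]
      have : T = 0 := by
        have := (trace_adjoint_mul_self_eq_zero T)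
        rw [← ht] at this
        exact this.mp hz
      have : S * P - P * S = 0 := this
      have : S * P = P * S := by rwa [sub_eq_zero] at this
      exact this
    · intro h
      have hT0 : T = 0 := by rw [hT, sub_eq_zero]; exact h
      have hz : t (LinearMap.adjoint T * T) = 0 := by rw [hT0]; simp
      linarith [master]
end
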